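/- Let F be a number field, p an odd prime, A an abelian variety over F with A[p] ⊆ A(F), and S a finite set of places containing the places above p, the bad reduction places, and the archimedean places. Then the p-fine Selmer group satisfies R_S(A[p]/F) = Hom(Cl_S(F), A[p]) ≅ Cl_S(F)[p]^{2d} as abelian groups, where d = dim A; in particular r_p(R_S(A[p]/F)) = 2d · r_p(Cl_S(F)). -/

import Mathlib

/-- The `p`-torsion subgroup `N[p]` of an abelian group `N`. -/
def pTors (p : ℕ) (N : Type*) [AddCommGroup N] : AddSubgroup N where
  carrier := {x | p • x = 0}
  zero_mem' := smul_zero p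
  add_mem' := by
    intro a b ha hb
    simp only [Set.mem_setOf_eq, smul_add] at *
    rw [ha, hb, add_zero]
  neg_mem' := by
    intro a ha
    simp only [Set.mem_setOf_eq, smul_neg] at *
    rw [ha, neg_zero]

/-- The `p`-rank `r_p(N) = dim_{𝔽_p} N[p]`: since `N[p]` is an elementary abelian
`p`-group, its `𝔽_p`-dimension is `log_p` of its cardinality. -/
noncomputable def pRank (p : ℕ) (N : Type*) [AddCommGroup N] : ℕ :=
  Nat.log p (Nat.card (pTors p N))

/-- Multiplication by `p` as an additive group homomorphism. -/
def pMul (p : ℕ) (N : Type*) [AddCommGroup N] : N →+ N :=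
  AddMonoidHom.mk' (fun x => p • x) fun a b => smul_add p a b
/-- The multiplicative group structure (composition) on `AddAut M` that older Mathlib provided. -/
instance addAutGroupOld (M : Type*) [Add M] : Group (AddAut M) where
  mul g h := AddEquiv.trans h g
  one := AddEquiv.refl _
  inv := AddEquiv.symm
  mul_assoc _ _ _ := rfl
  one_mul _ := rfl
  mul_one _ := rfl
  inv_mul_cancel := AddEquiv.self_trans_symm

section Cohomology

variable {G : Type*} [Group G] {M : Type*} [AddCommGroup M]

/-- 1-cocycles of `G` with coefficients in `M`, for the action `ρ`. -/
def cocycles (ρ : G →* AddAut M) : AddSubgroup (G → M) where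
  carrier := {f | ∀ g h : G, f (g * h) = f g + ρ g (f h)}
  zero_mem' := by intro g h; simp
  add_mem' := by
    intro a b ha hb g h
    simp only [Pi.add_apply, ha g h, hb g h, map_add]
    abel
  neg_mem' := by
    intro a ha g h
    simp only [Pi.neg_apply, ha g h, map_neg]
    abel

/-- 1-coboundaries inside the 1-cocycles. -/
def coboundaries (ρ : G →* AddAut M) : AddSubgroup ↥(cocycles ρ) where
  carrier := {f | ∃ m : M, ∀ g : G, (f : G → M) g = ρ g m - m}
  zero_mem' := ⟨0, by simp⟩
  add_mem' := by
    rintro a b ⟨m, hm⟩ ⟨m', hm'⟩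
    refine ⟨m + m', fun g => ?_⟩
    simp only [AddSubgroup.coe_add, Pi.add_apply, hm g, hm' g, map_add]
    abel
  neg_mem' := by
    rintro a ⟨m, hm⟩
    refine ⟨-m, fun g => ?_⟩
    simp only [AddSubgroup.coe_neg, Pi.neg_apply, hm g, map_neg]
    abel

/-- First group cohomology `H¹(G, M)` (cocycles modulo coboundaries). -/
abbrev H1 (ρ : G →* AddAut M) := ↥(cocycles ρ) ⧸ coboundaries ρ

/-- Restriction of 1-cocycles to a subgroup `H ≤ G`. -/
def resCocycle (ρ : G →* AddAut M) (H : Subgroup G) :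
    ↥(cocycles ρ) →+ ↥(cocycles (ρ.comp H.subtype)) where
  toFun f := ⟨fun h => (f : G → M) h, fun g h => f.2 g.1 h.1⟩
  map_zero' := rfl
  map_add' _ _ := rfl

/-- The restriction map `H¹(G, M) → H¹(H, M)`. -/
def resH1 (ρ : G →* AddAut M) (H : Subgroup G) :
    H1 ρ →+ H1 (ρ.comp H.subtype) :=
  QuotientAddGroup.map _ _ (resCocycle ρ H) (by
    rintro f ⟨m, hm⟩
    exact ⟨m, fun g => hm g.1⟩)

/-- The fine Selmer group attached to the local conditions given by the family of
subgroups `D i` (the decomposition subgroups at the places `i ∈ S`): the kernel of the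
localization map `H¹(G, M) → ∏_{i ∈ S} H¹(D i, M)`. -/
def fineSelmer (ρ : G →* AddAut M) {ι : Type*} (D : ι → Subgroup G) :
    AddSubgroup (H1 ρ) :=
  ⨅ i, (resH1 ρ (D i)).ker

/-- The invariants `M^G`. -/
def invar (ρ : G →* AddAut M) : AddSubgroup M where
  carrier := {m | ∀ g, ρ g m = m}
  zero_mem' := fun g => map_zero _
  add_mem' := fun ha hb g => by rw [map_add, ha g, hb g]
  neg_mem' := fun ha g => by rw [map_neg, ha g]

end Cohomology

section FineSelmerAux

lemma finselaux_card_quot_eq_card_tors (p : ℕ) (A : Type) [AddCommGroup A] [Finite A] :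
    Nat.card (A ⧸ (pMul p A).range) = Nat.card (pTors p A) := by
  have hker : (pMul p A).ker = pTors p A := by
    ext x; simp [AddMonoidHom.mem_ker, pMul, pTors]
  have h1 : Nat.card (A ⧸ (pMul p A).ker) = Nat.card (pMul p A).range :=
    Nat.card_congr (QuotientAddGroup.quotientKerEquivRange (pMul p A)).toEquiv
  have h2 := AddSubgroup.card_eq_card_quotient_mul_card_addSubgroup (pMul p A).ker (α := A)
  have h3 := AddSubgroup.card_eq_card_quotient_mul_card_addSubgroup (pMul p A).range (α := A)
  have hR : 0 < Nat.card (pMul p A).range := Nat.card_pos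
  rw [hker] at h1 h2
  have : Nat.card (A ⧸ (pMul p A).range) * Nat.card (pMul p A).range
      = Nat.card (pTors p A) * Nat.card (pMul p A).range := by
    rw [← h3, h2, h1]; ring
  exact Nat.eq_of_mul_eq_mul_right hR this

lemma finselaux_card_hom_eq (p : ℕ) (A : Type) [AddCommGroup A]
    (R : AddSubgroup A) (hR : ∀ f : A →+ ZMod p, ∀ x ∈ R, f x = 0) :
    Nat.card (A →+ ZMod p) = Nat.card ((A ⧸ R) →+ ZMod p) := by
  refine (Nat.card_congr (Equiv.symm ?_))
  exact ⟨fun F => F.comp (QuotientAddGroup.mk' R),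
    fun f => QuotientAddGroup.lift R f (fun x hx => hR f x hx),
    fun F => by refine DFunLike.ext _ _ ?_; rintro ⟨x⟩; rfl, fun f => by ext x; rfl⟩

lemma finselaux_card_pow_finrank (p : ℕ) [Fact p.Prime]
    (V : Type) [AddCommGroup V] [Finite V] [Module (ZMod p) V] :
    Nat.card V = p ^ (Module.finrank (ZMod p) V) := by
  have : Fintype V := Fintype.ofFinite V
  rw [Nat.card_eq_fintype_card, Module.card_eq_pow_finrank (K := ZMod p), ZMod.card]

lemma finselaux_card_dual (p : ℕ) [Fact p.Prime]
    (V : Type) [AddCommGroup V] [Finite V] [Module (ZMod p) V] :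
    Nat.card (V →+ ZMod p) = Nat.card V := by
  have : Finite (V →+ ZMod p) :=
    Finite.of_injective (fun f => (f : V → ZMod p)) DFunLike.coe_injective
  have e : (V →+ ZMod p) ≃ (V →ₗ[ZMod p] ZMod p) :=
    ⟨fun f => f.toZModLinearMap p, fun g => g.toAddMonoidHom, fun f => rfl, fun g => rfl⟩
  have : FiniteDimensional (ZMod p) V := Module.Finite.of_finite
  have : Finite (Module.Dual (ZMod p) V) :=
    Finite.of_injective (fun f => (f : V → ZMod p)) DFunLike.coe_injective
  rw [Nat.card_congr e]
  rw [finselaux_card_pow_finrank p (V := V),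
    finselaux_card_pow_finrank p (V := Module.Dual (ZMod p) V), Subspace.dual_finrank_eq]

lemma finselaux_dual_equiv (p : ℕ) [Fact p.Prime] (A : Type) [AddCommGroup A] [Finite A] :
    Nonempty ((A →+ ZMod p) ≃+ ↥(pTors p A)) := by
  letI mT : Module (ZMod p) (pTors p A) := AddCommGroup.zmodModule (by
    rintro ⟨x, hx⟩
    exact Subtype.ext (by show p • x = 0; simpa [pTors] using hx))
  letI mQ : Module (ZMod p) (A ⧸ (pMul p A).range) := QuotientAddGroup.zmodModule (by
    intro x; exact ⟨x, rfl⟩)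
  have hfin : Finite (A →+ ZMod p) :=
    Finite.of_injective (fun f => (f : A → ZMod p)) DFunLike.coe_injective
  have h1 : Nat.card (A →+ ZMod p) = Nat.card (pTors p A) := by
    rw [finselaux_card_hom_eq p A (pMul p A).range (by
      rintro f x ⟨y, rfl⟩
      show f (p • y) = 0
      rw [map_nsmul]
      exact ZModModule.char_nsmul_eq_zero p (f y)),
      finselaux_card_dual p _, finselaux_card_quot_eq_card_tors p A]
  have freeH : Module.Free (ZMod p) (A →+ ZMod p) :=
    Module.Free.of_divisionRing (ZMod p) (A →+ ZMod p)
  have freeT : Module.Free (ZMod p) ↥(pTors p A) :=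
    Module.Free.of_divisionRing (ZMod p) ↥(pTors p A)
  have finH : Module.Finite (ZMod p) (A →+ ZMod p) := Module.Finite.of_finite
  have finT : Module.Finite (ZMod p) ↥(pTors p A) := Module.Finite.of_finite
  have h2 : Module.finrank (ZMod p) (A →+ ZMod p) = Module.finrank (ZMod p) (pTors p A) := by
    apply Nat.pow_right_injective (Fact.out : p.Prime).two_le
    show p ^ Module.finrank (ZMod p) (A →+ ZMod p) = p ^ Module.finrank (ZMod p) (pTors p A)
    rw [← finselaux_card_pow_finrank p (V := (A →+ ZMod p)), ← finselaux_card_pow_finrank p (V := ↥(pTors p A)), h1]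
  obtain ⟨e⟩ := @FiniteDimensional.nonempty_linearEquiv_of_finrank_eq (ZMod p)
    (A →+ ZMod p) ↥(pTors p A) _ _ _ freeH _ mT freeT _ finH finT h2
  exact ⟨e.toAddEquiv⟩

end FineSelmerAux
section FineSelmerMain

variable {G : Type} [Group G] {ι : Type}

/-- The normal closure of the decomposition groups and commutators. -/
def finselN (D : ι → Subgroup G) : Subgroup G :=
  Subgroup.normalClosure ((⋃ i, (D i : Set G)) ∪ {x | ∃ a b : G, x = a * b * a⁻¹ * b⁻¹})

instance finselN_normal (D : ι → Subgroup G) : (finselN D).Normal :=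
  Subgroup.normalClosure_normal

variable (D : ι → Subgroup G) (M : Type) [AddCommGroup M]

lemma finsel_one_rho_apply (g : G) (m : M) : ((1 : G →* AddAut M) g) m = m := rfl

variable (C : Type) [CommGroup C] (clIso : (G ⧸ finselN D) ≃* C)

/-- The cocycle associated to a homomorphism `φ : C → M`. -/
def finselCocycle (φ : Additive C →+ M) : ↥(cocycles (1 : G →* AddAut M)) :=
  ⟨fun g => φ (Additive.ofMul (clIso ((QuotientGroup.mk g : G ⧸ finselN D)))),
   by
    intro g h
    rw [finsel_one_rho_apply, ← map_add]
    show φ (Additive.ofMul (clIso ((QuotientGroup.mk (g * h) : G ⧸ finselN D)))) = φ _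
    congr 1
    show Additive.ofMul (clIso (QuotientGroup.mk g * QuotientGroup.mk h)) = _
    rw [map_mul]
    rfl⟩

lemma finselCocycle_mem (φ : Additive C →+ M) :
    QuotientAddGroup.mk (finselCocycle D M C clIso φ)
      ∈ fineSelmer (1 : G →* AddAut M) D := by
  rw [fineSelmer, AddSubgroup.mem_iInf]
  intro i
  rw [AddMonoidHom.mem_ker]
  show QuotientAddGroup.mk _ = 0
  rw [QuotientAddGroup.eq_zero_iff]
  refine ⟨0, fun g => ?_⟩
  show φ (Additive.ofMul (clIso ((QuotientGroup.mk (g : G) : G ⧸ finselN D)))) = _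
  have hg : (QuotientGroup.mk (g : G) : G ⧸ finselN D) = 1 := by
    rw [QuotientGroup.eq_one_iff]
    exact Subgroup.subset_normalClosure (Or.inl (Set.mem_iUnion.2 ⟨i, g.2⟩))
  rw [hg, map_one]
  show φ 0 = ((1 : G →* AddAut M).comp (D i).subtype g) 0 - 0
  have : ((1 : G →* AddAut M).comp (D i).subtype g) 0 = (0 : M) := rfl
  rw [this, map_zero, sub_zero]

/-- The homomorphism `Hom(C, M) → Sel`. -/
def finselPsi : (Additive C →+ M) →+ ↥(fineSelmer (1 : G →* AddAut M) D) :=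
  AddMonoidHom.mk'
    (fun φ => ⟨QuotientAddGroup.mk (finselCocycle D M C clIso φ),
      finselCocycle_mem D M C clIso φ⟩)
    (fun φ ψ => Subtype.ext (congrArg QuotientAddGroup.mk
      (Subtype.ext (funext fun g => by
        show (φ + ψ) _ = φ _ + ψ _
        rfl))))

lemma finselPsi_bijective : Function.Bijective (finselPsi D M C clIso) := by
  constructor
  · rw [injective_iff_map_eq_zero]
    intro φ hφ
    have h0 : QuotientAddGroup.mk (finselCocycle D M C clIso φ)
        = (0 : H1 (1 : G →* AddAut M)) := congrArg Subtype.val hφ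
    rw [QuotientAddGroup.eq_zero_iff] at h0
    obtain ⟨m, hm⟩ := h0
    ext c
    obtain ⟨q, rfl⟩ := clIso.toEquiv.surjective (Additive.toMul c)
    obtain ⟨g, rfl⟩ := QuotientGroup.mk_surjective q
    have h' := hm g
    rw [finsel_one_rho_apply, sub_self] at h'
    exact h'
  · rintro ⟨x, hx⟩
    obtain ⟨f, rfl⟩ := QuotientAddGroup.mk_surjective x
    -- f vanishes on each D i
    have hDi : ∀ i : ι, ∀ g ∈ D i, (f : G → M) g = 0 := by
      intro i g hg
      rw [fineSelmer, AddSubgroup.mem_iInf] at hx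
      have hxi := hx i
      rw [AddMonoidHom.mem_ker] at hxi
      have h0 : QuotientAddGroup.mk (resCocycle (1 : G →* AddAut M) (D i) f)
          = (0 : H1 ((1 : G →* AddAut M).comp (D i).subtype)) := hxi
      rw [QuotientAddGroup.eq_zero_iff] at h0
      obtain ⟨m, hm⟩ := h0
      have h' := hm ⟨g, hg⟩
      have h'' : (f : G → M) g = ((1 : G →* AddAut M).comp (D i).subtype ⟨g, hg⟩) m - m := h'
      have h3 : ((1 : G →* AddAut M).comp (D i).subtype ⟨g, hg⟩) m = m := rfl
      rw [h3, sub_self] at h''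
      exact h''
    -- f is a homomorphism
    have hadd : ∀ g h : G, (f : G → M) (g * h) = (f : G → M) g + (f : G → M) h := by
      intro g h
      have := f.2 g h
      rwa [finsel_one_rho_apply] at this
    have hone : (f : G → M) 1 = 0 := by
      have h := hadd 1 1
      rw [mul_one] at h
      exact (left_eq_add.mp h)
    set F : G →* Multiplicative M :=
      { toFun := fun g => Multiplicative.ofAdd ((f : G → M) g)
        map_one' := congrArg Multiplicative.ofAdd hone
        map_mul' := fun g h => congrArg Multiplicative.ofAdd (hadd g h) } with hF
    have hFinv : ∀ g : G, (f : G → M) g⁻¹ = -(f : G → M) g := fun g => F.map_inv g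
    have hN : finselN D ≤ F.ker := by
      apply Subgroup.normalClosure_le_normal
      rintro x (hx' | ⟨a, b, rfl⟩)
      · obtain ⟨_, ⟨i, rfl⟩, hxi⟩ := hx'
        exact congrArg Multiplicative.ofAdd (hDi i x hxi)
      · have h0 : (f : G → M) (a * b * a⁻¹ * b⁻¹) = 0 := by
          rw [hadd (a * b * a⁻¹) b⁻¹, hadd (a * b) a⁻¹, hadd a b, hFinv, hFinv]
          abel
        exact congrArg Multiplicative.ofAdd h0
    set F' : G ⧸ finselN D →* Multiplicative M := QuotientGroup.lift _ F hN with hF'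
    set φ : Additive C →+ M :=
      AddMonoidHom.mk' (fun c => Multiplicative.toAdd (F' (clIso.symm (Additive.toMul c))))
        (fun a b => by
          show Multiplicative.toAdd (F' (clIso.symm (Additive.toMul a * Additive.toMul b))) = _
          rw [map_mul, map_mul]
          rfl) with hφ
    refine ⟨φ, ?_⟩
    apply Subtype.ext
    show QuotientAddGroup.mk (finselCocycle D M C clIso φ) = QuotientAddGroup.mk f
    congr 1
    apply Subtype.ext
    funext g
    show φ (Additive.ofMul (clIso ((QuotientGroup.mk g : G ⧸ finselN D)))) = (f : G → M) g
    show Multiplicative.toAdd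
      (F' (clIso.symm (clIso ((QuotientGroup.mk g : G ⧸ finselN D))))) = _
    rw [MulEquiv.symm_apply_apply]
    rfl

/-- The main equivalence `Sel ≃+ Hom(C, M)`. -/
noncomputable def finselEquiv : (Additive C →+ M) ≃+ ↥(fineSelmer (1 : G →* AddAut M) D) :=
  AddEquiv.ofBijective (finselPsi D M C clIso) (finselPsi_bijective D M C clIso)

end FineSelmerMain
/-- Suppose `A[p] ⊆ A(F)`, so that `G = G_S(F)` acts trivially on
`A[p] ≅ (ℤ/p)^{2d}`.  Let `D i` be the decomposition subgroups at the places of `S`,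
and let `N` be the normal closure of the subgroup generated by all `D i` together with
all commutators; by class field theory `G/N ≅ Gal(H_S/F) ≅ Cl_S(F)` (`p`-part), which
is the finite (`p`-)group `C`.  Then the `p`-fine Selmer group satisfies
`R_S(A[p]/F) = Hom(Cl_S(F), A[p]) ≅ Cl_S(F)[p]^{2d}` and
`r_p(R_S(A[p]/F)) = 2d · r_p(Cl_S(F))`. -/
theorem pFineSelmer_eq_hom_classGroup (p : ℕ) [Fact p.Prime] (hodd : Odd p) (d : ℕ)
    {G : Type} [Group G]
    {ι : Type} [Finite ι] (D : ι → Subgroup G)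
    (C : Type) [CommGroup C] [Finite C] (hCp : IsPGroup p C)
    (clIso : (G ⧸ Subgroup.normalClosure
        ((⋃ i, (D i : Set G)) ∪ {x | ∃ a b : G, x = a * b * a⁻¹ * b⁻¹})) ≃* C) :
    Nonempty (↥(fineSelmer (1 : G →* AddAut (Fin (2 * d) → ZMod p)) D) ≃+
        (Additive C →+ (Fin (2 * d) → ZMod p))) ∧
    Nonempty (↥(fineSelmer (1 : G →* AddAut (Fin (2 * d) → ZMod p)) D) ≃+
        (Fin (2 * d) → ↥(pTors p (Additive C)))) ∧
    pRank p ↥(fineSelmer (1 : G →* AddAut (Fin (2 * d) → ZMod p)) D)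
      = 2 * d * pRank p (Additive C) := by
  classical
  have hp1 : 1 < p := (Fact.out : p.Prime).one_lt
  letI : Finite (Additive C) := Finite.of_equiv C Additive.ofMul
  let e1 := finselEquiv D (Fin (2 * d) → ZMod p) C clIso
  let e2 : (Additive C →+ (Fin (2 * d) → ZMod p)) ≃+
      (Fin (2 * d) → (Additive C →+ ZMod p)) :=
    { toFun := fun F i => (Pi.evalAddMonoidHom (fun _ => ZMod p) i).comp F
      invFun := fun f => AddMonoidHom.mk' (fun a i => f i a)
        (by intro a b; funext i; simp)
      left_inv := fun F => by
        refine DFunLike.ext _ _ fun a => ?_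
        rfl
      right_inv := fun f => by
        funext i
        refine DFunLike.ext _ _ fun a => ?_
        rfl
      map_add' := fun F1 F2 => rfl }
  obtain ⟨e3⟩ := finselaux_dual_equiv p (Additive C)
  let e4 := AddEquiv.piCongrRight (fun _ : Fin (2 * d) => e3)
  let eSel := (e1.symm.trans e2).trans e4
  refine ⟨⟨e1.symm⟩, ⟨eSel⟩, ?_⟩
  letI mT : Module (ZMod p) (pTors p (Additive C)) := AddCommGroup.zmodModule (by
    rintro ⟨x, hx⟩
    exact Subtype.ext (by show p • x = 0; simpa [pTors] using hx))
  set k := Module.finrank (ZMod p) ↥(pTors p (Additive C)) with hk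
  have cardT : Nat.card ↥(pTors p (Additive C)) = p ^ k := finselaux_card_pow_finrank p _
  have hrankC : pRank p (Additive C) = k := by
    rw [pRank, cardT, Nat.log_pow hp1]
  have hsmul : ∀ y : Fin (2 * d) → ↥(pTors p (Additive C)), p • y = 0 := by
    intro y
    funext i
    refine Subtype.ext ?_
    show ((p • y i : ↥(pTors p (Additive C))) : Additive C) = 0
    have : ((p • y i : ↥(pTors p (Additive C))) : Additive C) = p • ((y i : Additive C)) := rfl
    rw [this]
    exact (y i).2
  have htop : pTors p ↥(fineSelmer (1 : G →* AddAut (Fin (2 * d) → ZMod p)) D) = ⊤ := by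
    rw [eq_top_iff]
    intro x _
    show p • x = 0
    apply eSel.injective
    have h1 : eSel (p • x) = p • eSel x := eSel.toAddMonoidHom.map_nsmul p x
    rw [h1, hsmul (eSel x)]
    exact (eSel.toAddMonoidHom.map_zero).symm
  have cardSel : Nat.card
      (pTors p ↥(fineSelmer (1 : G →* AddAut (Fin (2 * d) → ZMod p)) D)) = p ^ (k * (2 * d)) := by
    rw [htop, Nat.card_congr AddSubgroup.topEquiv.toEquiv, Nat.card_congr eSel.toEquiv,
      Nat.card_pi]
    simp only [cardT, Finset.prod_const, Finset.card_univ, Fintype.card_fin, ← pow_mul]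
  rw [pRank, cardSel, Nat.log_pow hp1, hrankC]
  ring
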